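/- For every integer N (positive or negative) there is a constant C_N, independent of μ ≥ 1, such that ‖⟨μ^{1/2} x₂⟩^N (T_μ f)(x',ξ')‖_{L²(ℝ⁴_{x',ξ'})} ≤ C_N ‖⟨μ^{1/2} y₂⟩^N f(y')‖_{L²(ℝ²_{y'})} for all f for which the right-hand side is finite. Here x' = (x₂,x₃) and y' = (y₂,y₃). -/

import Mathlib

open MeasureTheory

/-- The Fourier transform on `ℝ²`: `f̂(ζ) = ∫ e^{−i⟨x,ζ⟩} f(x) dx`. -/
noncomputable def fourierTransform2 (f : ℝ × ℝ → ℂ) (ζ : ℝ × ℝ) : ℂ :=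
  ∫ x : ℝ × ℝ, Complex.exp (-Complex.I * ((x.1 * ζ.1 + x.2 * ζ.2 : ℝ) : ℂ)) * f x

/-- The euclidean length of a vector in `ℝ²`. -/
noncomputable def euclNorm2 (ξ : ℝ × ℝ) : ℝ := Real.sqrt (ξ.1 ^ 2 + ξ.2 ^ 2)

/-- Japanese bracket `⟨s⟩ = (1+s²)^{1/2}`. -/
noncomputable def jBracket (s : ℝ) : ℝ := Real.sqrt (1 + s ^ 2)

/-- The wave packet transform at frequency scale `μ` with fundamental wave packet `g`. -/
noncomputable def wavePacket (μ : ℝ) (g : SchwartzMap (ℝ × ℝ) ℝ) (f : ℝ × ℝ → ℂ)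
    (x ξ : ℝ × ℝ) : ℂ :=
  (Real.sqrt μ : ℂ) *
    ∫ y : ℝ × ℝ, Complex.exp (-Complex.I * ((ξ.1 * (y.1 - x.1) + ξ.2 * (y.2 - x.2) : ℝ) : ℂ)) *
      ((g (Real.sqrt μ • (y - x)) : ℝ) : ℂ) * f y


open Complex Real
open scoped ENNReal

noncomputable section

lemma ofReal_norm_eq_coe_nnnorm {E : Type*} [SeminormedAddGroup E] (a : E) :
    ENNReal.ofReal ‖a‖ = (‖a‖₊ : ℝ≥0∞) := ofReal_norm a

lemma ennnorm_integral_le_lintegral_ennnorm {α G : Type*} [NormedAddCommGroup G] [NormedSpace ℝ G]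
    {m : MeasurableSpace α} {μ : Measure α} (f : α → G) :
    (‖∫ a, f a ∂μ‖₊ : ℝ≥0∞) ≤ ∫⁻ a, (‖f a‖₊ : ℝ≥0∞) ∂μ :=
  enorm_integral_le_lintegral_enorm f

lemma gauss1D {ε : ℝ} (hε : 0 < ε) (a : ℝ) :
    ∫ t : ℝ, Complex.exp (-Complex.I * a * t) * Complex.exp (-(ε : ℂ) * t ^ 2) =
      (Real.sqrt (π / ε) : ℂ) * Complex.exp (-(a : ℂ) ^ 2 / (4 * ε)) := by
  have h := fourierIntegral_gaussian (b := (ε : ℂ)) (by simpa using hε) (-(a : ℂ))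
  have h1 : ∀ t : ℝ, Complex.I * (-(a:ℂ)) * t = -Complex.I * a * t := by intro t; ring
  simp only [h1] at h
  rw [h]
  congr 1
  · rw [show ((π : ℂ) / ε) = ((π / ε : ℝ) : ℂ) by push_cast; ring,
      show ((1:ℂ)/2) = ((1/2 : ℝ) : ℂ) by norm_num,
      ← Complex.ofReal_cpow (by positivity) (1/2 : ℝ)]
    norm_num [Real.sqrt_eq_rpow]
  · congr 1
    push_cast
    ring

lemma gaussMass2D {ε : ℝ} (hε : 0 < ε) :
    ∫ z : ℝ × ℝ, Real.exp (-(z.1 ^ 2 + z.2 ^ 2) / (4 * ε)) = 4 * π * ε := by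
  have hb : 0 < (4 * ε)⁻¹ := by positivity
  have hpt : ∀ z : ℝ × ℝ, Real.exp (-(z.1 ^ 2 + z.2 ^ 2) / (4 * ε)) =
      Real.exp (-(4*ε)⁻¹ * z.1 ^ 2) * Real.exp (-(4*ε)⁻¹ * z.2 ^ 2) := by
    intro z; rw [← Real.exp_add]; congr 1; field_simp; ring
  simp only [hpt]
  rw [Measure.volume_eq_prod,
    integral_prod_mul (f := fun t : ℝ => Real.exp (-(4*ε)⁻¹ * t ^ 2))
      (g := fun t : ℝ => Real.exp (-(4*ε)⁻¹ * t ^ 2)), integral_gaussian]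
  rw [← Real.sqrt_mul (by positivity)]
  rw [show π / (4*ε)⁻¹ * (π / (4*ε)⁻¹) = (π * (4*ε)) ^ 2 by field_simp]
  rw [Real.sqrt_sq (by positivity)]
  ring

lemma integrable_gweight2D {ε : ℝ} (hε : 0 < ε) :
    Integrable (fun ξ : ℝ × ℝ => Real.exp (-(ε * (ξ.1 ^ 2 + ξ.2 ^ 2)))) := by
  have : ∀ ξ : ℝ × ℝ, Real.exp (-(ε * (ξ.1 ^ 2 + ξ.2 ^ 2))) =
      Real.exp (-ε * ξ.1 ^ 2) * Real.exp (-ε * ξ.2 ^ 2) := by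
    intro z; rw [← Real.exp_add]; ring_nf
  simp only [this]
  rw [Measure.volume_eq_prod]
  exact (integrable_exp_neg_mul_sq hε).mul_prod (integrable_exp_neg_mul_sq hε)

/-- The phase factor `e^{-i ξ·y}`. -/
def phase2 (ξ y : ℝ × ℝ) : ℂ := Complex.exp (-Complex.I * ((ξ.1 * y.1 + ξ.2 * y.2 : ℝ) : ℂ))

lemma phase2_norm (ξ y : ℝ × ℝ) : ‖phase2 ξ y‖ = 1 := by
  rw [phase2, Complex.norm_exp]
  simp

lemma phase2_nnnorm (ξ y : ℝ × ℝ) : (‖phase2 ξ y‖₊ : ℝ≥0∞) = 1 := by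
  rw [← ofReal_norm_eq_coe_nnnorm, phase2_norm, ENNReal.ofReal_one]

lemma phase2_continuous : Continuous (fun p : (ℝ × ℝ) × (ℝ × ℝ) => phase2 p.1 p.2) := by
  unfold phase2
  fun_prop

lemma phase2_mul_conj (ξ y y' : ℝ × ℝ) :
    phase2 ξ y * (starRingEnd ℂ) (phase2 ξ y') = phase2 ξ (y - y') := by
  unfold phase2
  rw [← Complex.exp_conj, ← Complex.exp_add]
  congr 1
  simp only [map_mul, map_neg, Complex.conj_I, Complex.conj_ofReal, Prod.fst_sub, Prod.snd_sub]
  push_cast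
  ring

lemma gaussFourier2D {ε : ℝ} (hε : 0 < ε) (z : ℝ × ℝ) :
    ∫ ξ : ℝ × ℝ, (Real.exp (-(ε * (ξ.1 ^ 2 + ξ.2 ^ 2))) : ℂ) * phase2 ξ z =
      ((π / ε * Real.exp (-(z.1 ^ 2 + z.2 ^ 2) / (4 * ε)) : ℝ) : ℂ) := by
  have hpt : ∀ ξ : ℝ × ℝ, (Real.exp (-(ε * (ξ.1 ^ 2 + ξ.2 ^ 2))) : ℂ) * phase2 ξ z =
      (Complex.exp (-Complex.I * z.1 * ξ.1) * Complex.exp (-(ε : ℂ) * ξ.1 ^ 2)) *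
      (Complex.exp (-Complex.I * z.2 * ξ.2) * Complex.exp (-(ε : ℂ) * ξ.2 ^ 2)) := by
    intro ξ
    unfold phase2
    rw [Complex.ofReal_exp]
    rw [← Complex.exp_add, ← Complex.exp_add, ← Complex.exp_add, ← Complex.exp_add]
    congr 1
    push_cast
    ring
  simp only [hpt]
  rw [Measure.volume_eq_prod,
    integral_prod_mul (f := fun t : ℝ => Complex.exp (-Complex.I * z.1 * t) *
        Complex.exp (-(ε : ℂ) * t ^ 2))
      (g := fun t : ℝ => Complex.exp (-Complex.I * z.2 * t) *
        Complex.exp (-(ε : ℂ) * t ^ 2)),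
    gauss1D hε z.1, gauss1D hε z.2]
  rw [show ∀ a b c d : ℂ, (a*b)*(c*d) = (a*c)*(b*d) by intros; ring]
  rw [← Complex.ofReal_mul, Real.mul_self_sqrt (by positivity), ← Complex.exp_add]
  rw [Complex.ofReal_mul, Complex.ofReal_exp]
  congr 2
  push_cast
  ring

lemma integrable_gaussKernel {ε : ℝ} (hε : 0 < ε) :
    Integrable (fun z : ℝ × ℝ => π / ε * Real.exp (-(z.1 ^ 2 + z.2 ^ 2) / (4 * ε))) := by
  have h4 : 0 < (4 * ε)⁻¹ := by positivity
  have : ∀ z : ℝ × ℝ, Real.exp (-(z.1 ^ 2 + z.2 ^ 2) / (4 * ε)) =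
      Real.exp (-((4 * ε)⁻¹ * (z.1 ^ 2 + z.2 ^ 2))) := by
    intro z; congr 1; field_simp
  simp only [this]
  exact (integrable_gweight2D h4).const_mul _

lemma gaussKernel_mass {ε : ℝ} (hε : 0 < ε) :
    ∫⁻ z : ℝ × ℝ, ENNReal.ofReal (π / ε * Real.exp (-(z.1 ^ 2 + z.2 ^ 2) / (4 * ε))) =
      ENNReal.ofReal (4 * π ^ 2) := by
  rw [← ofReal_integral_eq_lintegral_ofReal (integrable_gaussKernel hε)
      (Filter.Eventually.of_forall fun z => by positivity)]
  rw [integral_const_mul, gaussMass2D hε]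
  congr 1
  field_simp

lemma aesm_F {h : ℝ × ℝ → ℂ} (hm : AEStronglyMeasurable h volume) :
    AEStronglyMeasurable (fun ξ : ℝ × ℝ => ∫ y : ℝ × ℝ, phase2 ξ y * h y) volume := by
  have : AEStronglyMeasurable (fun p : (ℝ × ℝ) × (ℝ × ℝ) => phase2 p.1 p.2 * h p.2)
      (volume.prod volume) :=
    phase2_continuous.aestronglyMeasurable.mul
      (hm.comp_quasiMeasurePreserving Measure.quasiMeasurePreserving_snd)
  exact this.integral_prod_right'

lemma step_eps {h : ℝ × ℝ → ℂ} (hint : Integrable h) {ε : ℝ} (hε : 0 < ε) :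
    ENNReal.ofReal (∫ ξ : ℝ × ℝ,
        Real.exp (-(ε * (ξ.1 ^ 2 + ξ.2 ^ 2))) * ‖∫ y : ℝ × ℝ, phase2 ξ y * h y‖ ^ 2)
      ≤ ENNReal.ofReal (8 * π ^ 2) * ∫⁻ y : ℝ × ℝ, (‖h y‖₊ : ℝ≥0∞) ^ 2 := by
  set F : ℝ × ℝ → ℂ := fun ξ => ∫ y : ℝ × ℝ, phase2 ξ y * h y with hF
  set w : ℝ × ℝ → ℝ := fun ξ => Real.exp (-(ε * (ξ.1 ^ 2 + ξ.2 ^ 2))) with hw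
  set G : ℝ × ℝ → ℝ := fun z => π / ε * Real.exp (-(z.1 ^ 2 + z.2 ^ 2) / (4 * ε)) with hG
  have hGnn : ∀ z, 0 ≤ G z := fun z => by rw [hG]; positivity
  have hwnn : ∀ ξ, 0 ≤ w ξ := fun ξ => (Real.exp_pos _).le
  have hwle : ∀ ξ, w ξ ≤ 1 := fun ξ =>
    Real.exp_le_one_iff.2 (by rw [neg_nonpos]; positivity)
  set B : ℝ := ∫ y : ℝ × ℝ, ‖h y‖ with hB
  have hFm : AEStronglyMeasurable F volume := aesm_F hint.1
  have hFb : ∀ ξ, ‖F ξ‖ ≤ B := by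
    intro ξ
    refine le_trans (norm_integral_le_integral_norm _) (le_of_eq ?_)
    rw [hB]
    congr 1; ext y
    rw [norm_mul, phase2_norm, one_mul]
  have hBnn : 0 ≤ B := by rw [hB]; positivity
  set J : ℝ := ∫ ξ : ℝ × ℝ, w ξ * ‖F ξ‖ ^ 2 with hJ
  set K : ℂ := ∫ ξ : ℝ × ℝ, ((w ξ : ℝ) : ℂ) * (F ξ * (starRingEnd ℂ) (F ξ)) with hK
  -- K is the complexification of J
  have hKJ : K = (J : ℂ) := by
    have hpt : ∀ ξ : ℝ × ℝ, ((w ξ : ℝ) : ℂ) * (F ξ * (starRingEnd ℂ) (F ξ)) =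
        ((w ξ * ‖F ξ‖ ^ 2 : ℝ) : ℂ) := by
      intro ξ
      rw [Complex.mul_conj, Complex.normSq_eq_norm_sq]
      push_cast
      ring
    rw [hK, hJ]
    simp only [hpt]
    exact integral_ofReal
  -- Fubini computation of K
  have hwm : Continuous w := by rw [hw]; fun_prop
  have hKrep : K = ∫ y : ℝ × ℝ, h y *
      ∫ y' : ℝ × ℝ, (starRingEnd ℂ) (h y') * ((G (y - y') : ℝ) : ℂ) := by
    have e1 : K = ∫ ξ : ℝ × ℝ, ∫ y : ℝ × ℝ,
        (phase2 ξ y * h y) * (((w ξ : ℝ) : ℂ) * (starRingEnd ℂ) (F ξ)) := by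
      rw [hK]; congr 1; ext ξ
      rw [integral_mul_const]
      rw [show (∫ y : ℝ × ℝ, phase2 ξ y * h y) = F ξ from rfl]
      ring
    have hswap1 : Integrable (Function.uncurry fun (ξ y : ℝ × ℝ) =>
        (phase2 ξ y * h y) * (((w ξ : ℝ) : ℂ) * (starRingEnd ℂ) (F ξ)))
        (volume.prod volume) := by
      refine Integrable.mono' (g := fun p : (ℝ × ℝ) × (ℝ × ℝ) => (w p.1 * B) * ‖h p.2‖)
        (((integrable_gweight2D hε).mul_const B).mul_prod hint.norm) ?_ ?_
      · exact ((phase2_continuous.aestronglyMeasurable.mul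
          (hint.1.comp_quasiMeasurePreserving Measure.quasiMeasurePreserving_snd)).mul
          (((Complex.continuous_ofReal.comp hwm).comp continuous_fst).aestronglyMeasurable.mul
            ((RCLike.continuous_conj.comp_aestronglyMeasurable
              (hFm.comp_quasiMeasurePreserving Measure.quasiMeasurePreserving_fst)))))
      · refine Filter.Eventually.of_forall fun p => ?_
        have hnorm : ‖phase2 p.1 p.2 * h p.2 * (((w p.1 : ℝ) : ℂ) * (starRingEnd ℂ) (F p.1))‖ =
            ‖h p.2‖ * (w p.1 * ‖F p.1‖) := by
          rw [norm_mul, norm_mul, norm_mul, phase2_norm, RCLike.norm_conj, Complex.norm_real,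
            Real.norm_eq_abs, _root_.abs_of_nonneg (hwnn _), one_mul]
        rw [Function.uncurry, hnorm]
        calc ‖h p.2‖ * (w p.1 * ‖F p.1‖) ≤ ‖h p.2‖ * (w p.1 * B) :=
              mul_le_mul_of_nonneg_left
                (mul_le_mul_of_nonneg_left (hFb _) (hwnn _)) (norm_nonneg _)
          _ = w p.1 * B * ‖h p.2‖ := by ring
    have e2 : K = ∫ y : ℝ × ℝ, ∫ ξ : ℝ × ℝ,
        (phase2 ξ y * h y) * (((w ξ : ℝ) : ℂ) * (starRingEnd ℂ) (F ξ)) := by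
      rw [e1]; exact integral_integral_swap hswap1
    rw [e2]
    congr 1; ext y
    have e3 : ∀ ξ : ℝ × ℝ, (phase2 ξ y * h y) * (((w ξ : ℝ) : ℂ) * (starRingEnd ℂ) (F ξ)) =
        h y * (((w ξ : ℝ) : ℂ) * phase2 ξ y * (starRingEnd ℂ) (F ξ)) := by
      intro ξ; ring
    simp only [e3]
    rw [integral_const_mul]
    congr 1
    -- inner computation at fixed y
    have e4 : ∀ ξ : ℝ × ℝ, ((w ξ : ℝ) : ℂ) * phase2 ξ y * (starRingEnd ℂ) (F ξ) =
        ∫ y' : ℝ × ℝ, ((w ξ : ℝ) : ℂ) * (phase2 ξ y * (starRingEnd ℂ) (phase2 ξ y')) *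
          (starRingEnd ℂ) (h y') := by
      intro ξ
      rw [hF, ← integral_conj, ← integral_const_mul]
      congr 1; ext y'
      rw [map_mul]
      ring
    simp only [e4]
    have hswap2 : Integrable (Function.uncurry fun (ξ y' : ℝ × ℝ) =>
        ((w ξ : ℝ) : ℂ) * (phase2 ξ y * (starRingEnd ℂ) (phase2 ξ y')) *
          (starRingEnd ℂ) (h y')) (volume.prod volume) := by
      refine Integrable.mono' (g := fun p : (ℝ × ℝ) × (ℝ × ℝ) => w p.1 * ‖h p.2‖)
        ((integrable_gweight2D hε).mul_prod hint.norm) ?_ ?_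
      · refine AEStronglyMeasurable.mul (AEStronglyMeasurable.mul ?_ ?_) ?_
        · exact ((Complex.continuous_ofReal.comp hwm).comp continuous_fst).aestronglyMeasurable
        · exact ((phase2_continuous.comp (continuous_fst.prodMk continuous_const)).mul
            (Complex.continuous_conj.comp phase2_continuous)).aestronglyMeasurable
        · exact RCLike.continuous_conj.comp_aestronglyMeasurable
            (hint.1.comp_quasiMeasurePreserving Measure.quasiMeasurePreserving_snd)
      · refine Filter.Eventually.of_forall fun p => ?_
        have hnorm : ‖((w p.1 : ℝ) : ℂ) * (phase2 p.1 y * (starRingEnd ℂ) (phase2 p.1 p.2)) *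
            (starRingEnd ℂ) (h p.2)‖ = w p.1 * ‖h p.2‖ := by
          rw [norm_mul, norm_mul, norm_mul, phase2_norm, RCLike.norm_conj, RCLike.norm_conj,
            phase2_norm, Complex.norm_real, Real.norm_eq_abs, _root_.abs_of_nonneg (hwnn _)]
          ring
        rw [Function.uncurry, hnorm]
    rw [integral_integral_swap hswap2]
    congr 1; ext y'
    have e5 : ∀ ξ : ℝ × ℝ, ((w ξ : ℝ) : ℂ) * (phase2 ξ y * (starRingEnd ℂ) (phase2 ξ y')) *
        (starRingEnd ℂ) (h y') = ((w ξ : ℝ) : ℂ) * phase2 ξ (y - y') * (starRingEnd ℂ) (h y') := by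
      intro ξ; rw [phase2_mul_conj]
    simp only [e5]
    rw [integral_mul_const, gaussFourier2D hε (y - y')]
    ring
  -- Now the estimate
  set a : ℝ × ℝ → ℝ≥0∞ := fun y => (‖h y‖₊ : ℝ≥0∞) with haDef
  have ha : AEMeasurable a volume := hint.1.enorm
  have hGcont : Continuous G := by rw [hG]; fun_prop
  have Gm : Measurable fun z : ℝ × ℝ => ENNReal.ofReal (G z) :=
    hGcont.measurable.ennreal_ofReal
  have amgm : ∀ u v : ℝ≥0∞, u * v ≤ u ^ 2 + v ^ 2 := by
    intro u v
    rcases le_total u v with huv | huv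
    · calc u * v ≤ v * v := mul_le_mul_left huv v
        _ ≤ u ^ 2 + v ^ 2 := by rw [← pow_two]; exact le_add_self
    · calc u * v ≤ u * u := mul_le_mul_right huv u
        _ ≤ u ^ 2 + v ^ 2 := by rw [← pow_two]; exact le_self_add
  set c : ℝ≥0∞ := ENNReal.ofReal (4 * π ^ 2) with hc
  set S : ℝ≥0∞ := ∫⁻ y : ℝ × ℝ, a y ^ 2 with hS
  have step1 : ENNReal.ofReal J ≤ (‖K‖₊ : ℝ≥0∞) := by
    rw [hKJ, ← ofReal_norm_eq_coe_nnnorm, Complex.norm_real, Real.norm_eq_abs]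
    exact ENNReal.ofReal_le_ofReal (le_abs_self J)
  have step2 : (‖K‖₊ : ℝ≥0∞) ≤
      ∫⁻ y : ℝ × ℝ, a y * ∫⁻ y' : ℝ × ℝ, a y' * ENNReal.ofReal (G (y - y')) := by
    rw [hKrep]
    refine le_trans (ennnorm_integral_le_lintegral_ennnorm _) (lintegral_mono fun y => ?_)
    rw [nnnorm_mul, ENNReal.coe_mul]
    refine mul_le_mul_right ?_ _
    refine le_trans (ennnorm_integral_le_lintegral_ennnorm _) (lintegral_mono fun y' => ?_)
    rw [nnnorm_mul, ENNReal.coe_mul, RCLike.nnnorm_conj]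
    refine mul_le_mul_right (le_of_eq ?_) _
    rw [← ofReal_norm_eq_coe_nnnorm, Complex.norm_real, Real.norm_eq_abs,
      _root_.abs_of_nonneg (hGnn _)]
  have hGmass : ∀ y : ℝ × ℝ, ∫⁻ y' : ℝ × ℝ, ENNReal.ofReal (G (y - y')) = c := by
    intro y
    have heven : ∀ y' : ℝ × ℝ, G (y - y') = G (y' - y) := by
      intro y'
      rw [hG]
      simp only [Prod.fst_sub, Prod.snd_sub]
      ring_nf
    simp only [heven]
    rw [lintegral_sub_right_eq_self (fun z : ℝ × ℝ => ENNReal.ofReal (G z)) y]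
    exact gaussKernel_mass hε
  have hGmass' : ∀ y' : ℝ × ℝ, ∫⁻ y : ℝ × ℝ, ENNReal.ofReal (G (y - y')) = c := by
    intro y'
    rw [lintegral_sub_right_eq_self (fun z : ℝ × ℝ => ENNReal.ofReal (G z)) y']
    exact gaussKernel_mass hε
  have step3 : (∫⁻ y : ℝ × ℝ, a y * ∫⁻ y' : ℝ × ℝ, a y' * ENNReal.ofReal (G (y - y')))
      ≤ ∫⁻ y : ℝ × ℝ, ∫⁻ y' : ℝ × ℝ, (a y ^ 2 + a y' ^ 2) * ENNReal.ofReal (G (y - y')) := by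
    refine lintegral_mono fun y => ?_
    rw [← lintegral_const_mul' (a y) _ ENNReal.coe_ne_top]
    refine lintegral_mono fun y' => ?_
    rw [← mul_assoc]
    exact mul_le_mul_left (amgm _ _) _
  have hsplit : (∫⁻ y : ℝ × ℝ, ∫⁻ y' : ℝ × ℝ, (a y ^ 2 + a y' ^ 2) * ENNReal.ofReal (G (y - y')))
      = c * S + c * S := by
    have inner_eq : ∀ y : ℝ × ℝ,
        ∫⁻ y' : ℝ × ℝ, (a y ^ 2 + a y' ^ 2) * ENNReal.ofReal (G (y - y'))
          = a y ^ 2 * c + ∫⁻ y' : ℝ × ℝ, a y' ^ 2 * ENNReal.ofReal (G (y - y')) := by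
      intro y
      simp only [add_mul]
      have m1 : Measurable fun y' : ℝ × ℝ => ENNReal.ofReal (G (y - y')) :=
        Gm.comp (measurable_const.sub measurable_id)
      rw [lintegral_add_left' (m1.aemeasurable.const_mul _)]
      congr 1
      rw [lintegral_const_mul' _ _ (ENNReal.pow_ne_top ENNReal.coe_ne_top)]
      rw [hGmass y]
    simp only [inner_eq]
    rw [lintegral_add_left' ((ha.pow_const 2).mul_const c)]
    congr 1
    · rw [lintegral_mul_const' c _ ENNReal.ofReal_ne_top, hS, mul_comm]
    · have hswap : AEMeasurable
          (fun p : (ℝ × ℝ) × (ℝ × ℝ) => a p.2 ^ 2 * ENNReal.ofReal (G (p.1 - p.2)))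
          (volume.prod volume) := by
        refine AEMeasurable.mul (f := fun p : (ℝ × ℝ) × (ℝ × ℝ) => a p.2 ^ 2)
          (g := fun p : (ℝ × ℝ) × (ℝ × ℝ) => ENNReal.ofReal (G (p.1 - p.2))) ?_ ?_
        · exact ((ha.comp_quasiMeasurePreserving Measure.quasiMeasurePreserving_snd).pow_const 2)
        · exact (Gm.comp (measurable_fst.sub measurable_snd)).aemeasurable
      rw [lintegral_lintegral_swap hswap]
      have : ∀ y' : ℝ × ℝ, ∫⁻ y : ℝ × ℝ, a y' ^ 2 * ENNReal.ofReal (G (y - y'))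
          = a y' ^ 2 * c := by
        intro y'
        rw [lintegral_const_mul' _ _ (ENNReal.pow_ne_top ENNReal.coe_ne_top), hGmass' y']
      simp only [this]
      rw [lintegral_mul_const' c _ ENNReal.ofReal_ne_top, hS, mul_comm]
  calc ENNReal.ofReal J ≤ (‖K‖₊ : ℝ≥0∞) := step1
    _ ≤ _ := step2
    _ ≤ _ := step3
    _ = c * S + c * S := hsplit
    _ = (c + c) * S := by rw [add_mul]
    _ = ENNReal.ofReal (8 * π ^ 2) * S := by
        rw [hc, ← ENNReal.ofReal_add (by positivity) (by positivity)]
        congr 1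
        ring

/-- **Plancherel-type upper bound**: for integrable `h` on `ℝ²`,
`∫ |ĥ(ξ)|² dξ ≤ 8π² ∫ |h|²` (with the non-normalized transform). -/
lemma lintegral_fourier_sq_le {h : ℝ × ℝ → ℂ} (hint : Integrable h) :
    ∫⁻ ξ : ℝ × ℝ, (‖∫ y : ℝ × ℝ, phase2 ξ y * h y‖₊ : ℝ≥0∞) ^ 2
      ≤ ENNReal.ofReal (8 * π ^ 2) * ∫⁻ y : ℝ × ℝ, (‖h y‖₊ : ℝ≥0∞) ^ 2 := by
  set F : ℝ × ℝ → ℂ := fun ξ => ∫ y : ℝ × ℝ, phase2 ξ y * h y with hF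
  have hFm : AEStronglyMeasurable F volume := aesm_F hint.1
  set B : ℝ := ∫ y : ℝ × ℝ, ‖h y‖ with hB
  have hFb : ∀ ξ, ‖F ξ‖ ≤ B := by
    intro ξ
    refine le_trans (norm_integral_le_integral_norm _) (le_of_eq ?_)
    rw [hB]
    congr 1; ext y
    rw [norm_mul, phase2_norm, one_mul]
  have hε : ∀ n : ℕ, (0 : ℝ) < 1 / (n + 1) := fun n => by positivity
  set fn : ℕ → ℝ × ℝ → ℝ≥0∞ := fun n ξ =>
    ENNReal.ofReal (Real.exp (-((1 / (n + 1) : ℝ) * (ξ.1 ^ 2 + ξ.2 ^ 2))) * ‖F ξ‖ ^ 2) with hfn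
  have hwcont : ∀ n : ℕ, Continuous fun ξ : ℝ × ℝ =>
      Real.exp (-((1 / (n + 1) : ℝ) * (ξ.1 ^ 2 + ξ.2 ^ 2))) := fun n => by fun_prop
  have hfn_meas : ∀ n, AEMeasurable (fn n) volume := by
    intro n
    exact (((hwcont n).aemeasurable).mul
      ((hFm.norm.aemeasurable).pow_const 2)).ennreal_ofReal
  have hmono : ∀ ξ, Monotone fun n => fn n ξ := by
    intro ξ n m hnm
    refine ENNReal.ofReal_le_ofReal (mul_le_mul_of_nonneg_right ?_ (by positivity))
    refine Real.exp_le_exp.2 ?_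
    rw [neg_le_neg_iff]
    refine mul_le_mul_of_nonneg_right ?_ (by positivity)
    apply one_div_le_one_div_of_le (by positivity)
    exact add_le_add_left (Nat.cast_le.2 hnm) 1
  have hofReal : ∀ ξ, ENNReal.ofReal (‖F ξ‖ ^ 2) = (‖F ξ‖₊ : ℝ≥0∞) ^ 2 := by
    intro ξ
    rw [ENNReal.ofReal_pow (norm_nonneg _), ofReal_norm_eq_coe_nnnorm]
  have htends : ∀ ξ, Filter.Tendsto (fun n => fn n ξ) Filter.atTop
      (nhds ((‖F ξ‖₊ : ℝ≥0∞) ^ 2)) := by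
    intro ξ
    rw [← hofReal ξ]
    refine (ENNReal.continuous_ofReal.tendsto _).comp ?_
    have h1 : Filter.Tendsto (fun n : ℕ => (1 / (n + 1) : ℝ)) Filter.atTop (nhds 0) :=
      tendsto_one_div_add_atTop_nhds_zero_nat
    have h2 : Filter.Tendsto
        (fun n : ℕ => Real.exp (-((1 / (n + 1) : ℝ) * (ξ.1 ^ 2 + ξ.2 ^ 2))))
        Filter.atTop (nhds 1) := by
      have := ((h1.mul_const (ξ.1 ^ 2 + ξ.2 ^ 2)).neg).comp Filter.tendsto_id
      simp only [neg_zero, zero_mul] at this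
      simpa [Function.comp_def] using (Real.continuous_exp.tendsto 0).comp this
    simpa using h2.mul_const (‖F ξ‖ ^ 2)
  have hsup : ∀ ξ, (⨆ n, fn n ξ) = (‖F ξ‖₊ : ℝ≥0∞) ^ 2 := fun ξ =>
    tendsto_nhds_unique (tendsto_atTop_iSup (hmono ξ)) (htends ξ)
  have key : ∫⁻ ξ : ℝ × ℝ, (‖F ξ‖₊ : ℝ≥0∞) ^ 2 = ⨆ n, ∫⁻ ξ, fn n ξ := by
    rw [← lintegral_iSup' hfn_meas (Filter.Eventually.of_forall hmono)]
    congr 1; ext ξ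
    rw [hsup]
  rw [key]
  refine iSup_le fun n => ?_
  have hBnn : 0 ≤ B := by rw [hB]; positivity
  have hJint : Integrable (fun ξ : ℝ × ℝ =>
      Real.exp (-((1 / (n + 1) : ℝ) * (ξ.1 ^ 2 + ξ.2 ^ 2))) * ‖F ξ‖ ^ 2) := by
    refine Integrable.mono' ((integrable_gweight2D (hε n)).mul_const (B ^ 2))
      ((hwcont n).aestronglyMeasurable.mul
        ((hFm.norm.aemeasurable.pow_const 2).aestronglyMeasurable)) ?_
    refine Filter.Eventually.of_forall fun ξ => ?_
    rw [Real.norm_eq_abs, _root_.abs_of_nonneg (by positivity)]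
    refine mul_le_mul_of_nonneg_left ?_ (Real.exp_pos _).le
    exact pow_le_pow_left₀ (norm_nonneg _) (hFb ξ) 2
  have heq : ∫⁻ ξ, fn n ξ = ENNReal.ofReal (∫ ξ : ℝ × ℝ,
      Real.exp (-((1 / (n + 1) : ℝ) * (ξ.1 ^ 2 + ξ.2 ^ 2))) * ‖F ξ‖ ^ 2) := by
    rw [← ofReal_integral_eq_lintegral_ofReal hJint
      (Filter.Eventually.of_forall fun ξ => by positivity)]
  rw [heq]
  exact step_eps hint (hε n)

lemma jBracket_pos (s : ℝ) : 0 < jBracket s := Real.sqrt_pos.2 (by positivity)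

lemma jBracket_one_le (s : ℝ) : 1 ≤ jBracket s := by
  have := Real.sqrt_le_sqrt (show (1:ℝ) ≤ 1 + s ^ 2 by nlinarith [sq_nonneg s])
  simpa [jBracket] using this

lemma jBracket_sq (s : ℝ) : jBracket s ^ 2 = 1 + s ^ 2 :=
  Real.sq_sqrt (by positivity)

lemma jBracket_neg (s : ℝ) : jBracket (-s) = jBracket s := by
  rw [jBracket, jBracket, neg_pow]
  norm_num

lemma jBracket_le_one_add (s : ℝ) : jBracket s ≤ 1 + |s| := by
  rw [jBracket]
  rw [show (1:ℝ) + |s| = Real.sqrt ((1 + |s|)^2) from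
    (Real.sqrt_sq (by positivity)).symm]
  exact Real.sqrt_le_sqrt (by nlinarith [abs_nonneg s, _root_.sq_abs s])

lemma peetre_base (a b : ℝ) :
    jBracket a ^ 2 ≤ 2 * jBracket (a - b) ^ 2 * jBracket b ^ 2 := by
  rw [jBracket_sq, jBracket_sq, jBracket_sq]
  nlinarith [sq_nonneg (a - 2 * b), sq_nonneg ((a - b) * b)]

lemma peetre_zpow (N : ℤ) (a b : ℝ) :
    (jBracket a ^ N) ^ 2 ≤
      2 ^ N.natAbs * jBracket (a - b) ^ (2 * N.natAbs) * (jBracket b ^ N) ^ 2 := by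
  have hpow : ∀ u v : ℝ, ∀ n : ℕ, (jBracket u ^ n) ^ 2 ≤
      2 ^ n * jBracket (u - v) ^ (2 * n) * (jBracket v ^ n) ^ 2 := by
    intro u v n
    have base := peetre_base u v
    calc (jBracket u ^ n) ^ 2 = (jBracket u ^ 2) ^ n := by ring
      _ ≤ (2 * jBracket (u - v) ^ 2 * jBracket v ^ 2) ^ n :=
          pow_le_pow_left₀ (by positivity) base n
      _ = 2 ^ n * jBracket (u - v) ^ (2 * n) * (jBracket v ^ n) ^ 2 := by ring
  rcases Int.natAbs_eq N with hN | hN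
  · rw [hN]
    simp only [Int.natAbs_natCast, zpow_natCast]
    exact hpow a b N.natAbs
  · set n := N.natAbs with hn
    rw [hN]
    have hba := hpow b a n
    have hba' : (jBracket b ^ n) ^ 2 ≤
        2 ^ n * jBracket (a - b) ^ (2 * n) * (jBracket a ^ n) ^ 2 := by
      have : jBracket (b - a) = jBracket (a - b) := by
        rw [show b - a = -(a - b) by ring, jBracket_neg]
      rwa [this] at hba
    have hPa : (0:ℝ) < (jBracket a ^ n) ^ 2 := pow_pos (pow_pos (jBracket_pos a) n) 2
    have hPb : (0:ℝ) < (jBracket b ^ n) ^ 2 := pow_pos (pow_pos (jBracket_pos b) n) 2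
    rw [zpow_neg, zpow_neg, zpow_natCast, zpow_natCast, inv_pow, inv_pow]
    calc ((jBracket a ^ n) ^ 2)⁻¹
        = (jBracket b ^ n) ^ 2 * (((jBracket b ^ n) ^ 2)⁻¹ * ((jBracket a ^ n) ^ 2)⁻¹) := by
          rw [← mul_assoc, mul_inv_cancel₀ hPb.ne', one_mul]
      _ ≤ (2 ^ n * jBracket (a - b) ^ (2 * n) * (jBracket a ^ n) ^ 2) *
          (((jBracket b ^ n) ^ 2)⁻¹ * ((jBracket a ^ n) ^ 2)⁻¹) :=
          mul_le_mul_of_nonneg_right hba' (by positivity)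
      _ = 2 ^ n * jBracket (a - b) ^ (2 * n) * ((jBracket b ^ n) ^ 2)⁻¹ := by
          rw [mul_comm (((jBracket b ^ n) ^ 2)⁻¹), ← mul_assoc, mul_assoc _ ((jBracket a ^ n) ^ 2),
            mul_inv_cancel₀ hPa.ne', mul_one]

lemma schwartz_weight_lintegral (g : SchwartzMap (ℝ × ℝ) ℝ) (k : ℕ) :
    ∃ D : ℝ, 0 ≤ D ∧
      ∫⁻ z : ℝ × ℝ, ENNReal.ofReal (jBracket z.1 ^ (2 * k)) * (‖g z‖₊ : ℝ≥0∞) ^ 2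
        ≤ ENNReal.ofReal D := by
  set Kc : ℝ := 2 ^ (2 * k + 3) *
    ((Finset.Iic (2 * k + 3, 0)).sup (fun m => SchwartzMap.seminorm ℝ m.1 m.2)) g with hKcDef
  have hKc : ∀ z : ℝ × ℝ, (1 + ‖z‖) ^ (2 * k + 3) * ‖g z‖ ≤ Kc := by
    intro z
    simpa [norm_iteratedFDeriv_zero] using
      SchwartzMap.one_add_le_sup_seminorm_apply (𝕜 := ℝ) (m := (2 * k + 3, 0))
        le_rfl le_rfl g z
  have hKc0 : 0 ≤ Kc :=
    mul_nonneg (by positivity) (apply_nonneg _ g)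
  have claim : ∀ z : ℝ × ℝ, jBracket z.1 ^ (2 * k) * ‖g z‖ ^ 2 ≤
      Kc ^ 2 * ((1 + ‖z‖) ^ 3)⁻¹ := by
    intro z
    set t : ℝ := 1 + ‖z‖ with ht
    have ht1 : 1 ≤ t := by rw [ht]; have := norm_nonneg z; linarith
    have ht0 : 0 < t := lt_of_lt_of_le one_pos ht1
    have hjb : jBracket z.1 ≤ t := by
      refine le_trans (jBracket_le_one_add z.1) ?_
      rw [ht]
      have : |z.1| ≤ ‖z‖ := by rw [← Real.norm_eq_abs]; exact norm_fst_le z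
      linarith
    have h1 : jBracket z.1 ^ (2 * k) ≤ t ^ (2 * k) :=
      pow_le_pow_left₀ (jBracket_pos z.1).le hjb _
    have hgle : ‖g z‖ ≤ Kc := by
      refine le_trans ?_ (hKc z)
      exact le_mul_of_one_le_left (norm_nonneg _) (one_le_pow₀ ht1)
    rw [← div_eq_mul_inv, le_div_iff₀ (by positivity)]
    calc jBracket z.1 ^ (2 * k) * ‖g z‖ ^ 2 * t ^ 3
        ≤ t ^ (2 * k) * ‖g z‖ ^ 2 * t ^ 3 :=
          mul_le_mul_of_nonneg_right
            (mul_le_mul_of_nonneg_right h1 (sq_nonneg _)) (by positivity)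
      _ = (t ^ (2 * k + 3) * ‖g z‖) * ‖g z‖ := by ring
      _ ≤ Kc * Kc := mul_le_mul (hKc z) hgle (norm_nonneg _) hKc0
      _ = Kc ^ 2 := (sq Kc).symm
  have hfinrank : (Module.finrank ℝ (ℝ × ℝ) : ℝ) < 3 := by
    rw [Module.finrank_prod]
    simp
    norm_num
  have hint : Integrable (fun z : ℝ × ℝ => (1 + ‖z‖) ^ (-(3:ℝ))) :=
    integrable_one_add_norm hfinrank
  refine ⟨Kc ^ 2 * ∫ z : ℝ × ℝ, (1 + ‖z‖) ^ (-(3:ℝ)),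
    mul_nonneg (sq_nonneg _) (integral_nonneg fun z => Real.rpow_nonneg (by positivity) _), ?_⟩
  have hptw : ∀ z : ℝ × ℝ,
      ENNReal.ofReal (jBracket z.1 ^ (2 * k)) * (‖g z‖₊ : ℝ≥0∞) ^ 2 ≤
        ENNReal.ofReal (Kc ^ 2 * (1 + ‖z‖) ^ (-(3:ℝ))) := by
    intro z
    have hrw : (‖g z‖₊ : ℝ≥0∞) ^ 2 = ENNReal.ofReal (‖g z‖ ^ 2) := by
      rw [ENNReal.ofReal_pow (norm_nonneg _), ofReal_norm_eq_coe_nnnorm]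
    rw [hrw, ← ENNReal.ofReal_mul (pow_nonneg (jBracket_pos z.1).le _)]
    refine ENNReal.ofReal_le_ofReal ?_
    have : (1 + ‖z‖) ^ (-(3:ℝ)) = ((1 + ‖z‖) ^ 3)⁻¹ := by
      rw [Real.rpow_neg (by positivity), show ((3:ℝ)) = ((3:ℕ):ℝ) by norm_num,
        Real.rpow_natCast]
    rw [this]
    exact claim z
  calc ∫⁻ z : ℝ × ℝ, ENNReal.ofReal (jBracket z.1 ^ (2 * k)) * (‖g z‖₊ : ℝ≥0∞) ^ 2
      ≤ ∫⁻ z : ℝ × ℝ, ENNReal.ofReal (Kc ^ 2 * (1 + ‖z‖) ^ (-(3:ℝ))) :=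
        lintegral_mono hptw
    _ = ENNReal.ofReal (∫ z : ℝ × ℝ, Kc ^ 2 * (1 + ‖z‖) ^ (-(3:ℝ))) := by
        rw [ofReal_integral_eq_lintegral_ofReal (hint.const_mul _)
          (Filter.Eventually.of_forall fun z => by positivity)]
    _ = ENNReal.ofReal (Kc ^ 2 * ∫ z : ℝ × ℝ, (1 + ‖z‖) ^ (-(3:ℝ))) := by
        rw [integral_const_mul]

lemma kernel_bound (g : SchwartzMap (ℝ × ℝ) ℝ) (heven : ∀ z : ℝ × ℝ, g (-z) = g z) (N : ℤ) :
    ∃ D : ℝ, 0 ≤ D ∧ ∀ μ : ℝ, 1 ≤ μ → ∀ y : ℝ × ℝ,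
      ENNReal.ofReal μ * ∫⁻ x : ℝ × ℝ,
          ENNReal.ofReal ((jBracket (Real.sqrt μ * x.1) ^ N) ^ 2) *
            (‖g (Real.sqrt μ • (y - x))‖₊ : ℝ≥0∞) ^ 2
        ≤ ENNReal.ofReal ((2 : ℝ) ^ N.natAbs * D) *
            ENNReal.ofReal ((jBracket (Real.sqrt μ * y.1) ^ N) ^ 2) := by
  obtain ⟨D, hD0, hD⟩ := schwartz_weight_lintegral g N.natAbs
  refine ⟨D, hD0, ?_⟩
  intro μ hμ y
  have hμ0 : (0:ℝ) < μ := lt_of_lt_of_le one_pos hμ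
  set s : ℝ := Real.sqrt μ with hs
  have hs0 : 0 < s := Real.sqrt_pos.2 hμ0
  have hs2 : s ^ 2 = μ := Real.sq_sqrt hμ0.le
  set Φ : ℝ × ℝ → ℝ≥0∞ := fun z =>
    ENNReal.ofReal (jBracket z.1 ^ (2 * N.natAbs)) * (‖g z‖₊ : ℝ≥0∞) ^ 2 with hΦ
  have hjbc : Continuous fun t : ℝ => jBracket t := by
    unfold jBracket; fun_prop
  have hΦm : Measurable Φ := by
    refine Measurable.mul
      (f := fun z : ℝ × ℝ => ENNReal.ofReal (jBracket z.1 ^ (2 * N.natAbs)))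
      (g := fun z : ℝ × ℝ => (‖g z‖₊ : ℝ≥0∞) ^ 2) ?_ ?_
    · exact (((hjbc.comp continuous_fst).pow _).measurable).ennreal_ofReal
    · exact (g.continuous.measurable.nnnorm.coe_nnreal_ennreal).pow_const 2
  have hΦeven : ∀ z : ℝ × ℝ, Φ (-z) = Φ z := by
    intro z
    rw [hΦ]
    simp only [heven z, Prod.fst_neg]
    congr 2
    rw [show 2 * N.natAbs = N.natAbs * 2 by ring, pow_mul, pow_mul, jBracket_neg]
  -- pointwise Peetre bound
  have hpt : ∀ x : ℝ × ℝ,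
      ENNReal.ofReal ((jBracket (s * x.1) ^ N) ^ 2) * (‖g (s • (y - x))‖₊ : ℝ≥0∞) ^ 2
        ≤ (ENNReal.ofReal ((2:ℝ) ^ N.natAbs) *
            ENNReal.ofReal ((jBracket (s * y.1) ^ N) ^ 2)) * Φ (s • (y - x)) := by
    intro x
    have hpeetre := peetre_zpow N (s * x.1) (s * y.1)
    have hfst : (s • (y - x)).1 = s * (y.1 - x.1) := by
      simp [Prod.smul_fst, smul_eq_mul]
    have hjb_eq : jBracket (s * x.1 - s * y.1) ^ (2 * N.natAbs)
        = jBracket ((s • (y - x)).1) ^ (2 * N.natAbs) := by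
      rw [hfst, show s * (y.1 - x.1) = -(s * x.1 - s * y.1) by ring]
      rw [show 2 * N.natAbs = N.natAbs * 2 by ring, pow_mul, pow_mul, jBracket_neg]
    have h1 : ENNReal.ofReal ((jBracket (s * x.1) ^ N) ^ 2) ≤
        ENNReal.ofReal ((2:ℝ) ^ N.natAbs) *
          ENNReal.ofReal ((jBracket (s * y.1) ^ N) ^ 2) *
          ENNReal.ofReal (jBracket ((s • (y - x)).1) ^ (2 * N.natAbs)) := by
      rw [← ENNReal.ofReal_mul (by positivity), ← ENNReal.ofReal_mul (by positivity)]
      refine ENNReal.ofReal_le_ofReal ?_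
      rw [← hjb_eq]
      calc (jBracket (s * x.1) ^ N) ^ 2
          ≤ 2 ^ N.natAbs * jBracket (s * x.1 - s * y.1) ^ (2 * N.natAbs) *
            (jBracket (s * y.1) ^ N) ^ 2 := hpeetre
        _ = 2 ^ N.natAbs * (jBracket (s * y.1) ^ N) ^ 2 *
            jBracket (s * x.1 - s * y.1) ^ (2 * N.natAbs) := by ring
    calc ENNReal.ofReal ((jBracket (s * x.1) ^ N) ^ 2) * (‖g (s • (y - x))‖₊ : ℝ≥0∞) ^ 2
        ≤ (ENNReal.ofReal ((2:ℝ) ^ N.natAbs) *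
            ENNReal.ofReal ((jBracket (s * y.1) ^ N) ^ 2) *
            ENNReal.ofReal (jBracket ((s • (y - x)).1) ^ (2 * N.natAbs))) *
            (‖g (s • (y - x))‖₊ : ℝ≥0∞) ^ 2 := mul_le_mul_left h1 _
      _ = (ENNReal.ofReal ((2:ℝ) ^ N.natAbs) *
            ENNReal.ofReal ((jBracket (s * y.1) ^ N) ^ 2)) * Φ (s • (y - x)) := by
          rw [hΦ]
          ring
  -- translation and scaling
  have htrans : ∫⁻ x : ℝ × ℝ, Φ (s • (y - x)) = ∫⁻ x : ℝ × ℝ, Φ (s • x) := by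
    have : ∀ x : ℝ × ℝ, Φ (s • (y - x)) = (fun t : ℝ × ℝ => Φ (s • t)) (x - y) := by
      intro x
      simp only
      rw [show x - y = -(y - x) by ring, smul_neg, hΦeven]
    simp only [this]
    exact lintegral_sub_right_eq_self (fun t : ℝ × ℝ => Φ (s • t)) y
  have hscale : ∫⁻ x : ℝ × ℝ, Φ (s • x) = ENNReal.ofReal μ⁻¹ * ∫⁻ z : ℝ × ℝ, Φ z := by
    have hmap := Measure.map_addHaar_smul (μ := (volume : Measure (ℝ × ℝ))) (ne_of_gt hs0)
    have hlm : ∫⁻ z : ℝ × ℝ, Φ z ∂(Measure.map (s • ·) volume) =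
        ∫⁻ x : ℝ × ℝ, Φ (s • x) :=
      lintegral_map hΦm (measurable_const_smul s)
    rw [← hlm, hmap, lintegral_smul_measure]
    congr 1
    rw [Module.finrank_prod, Module.finrank_self]
    norm_num
    rw [hs2]
  have hμinv : ENNReal.ofReal μ * ENNReal.ofReal μ⁻¹ = 1 := by
    rw [← ENNReal.ofReal_mul hμ0.le, mul_inv_cancel₀ (ne_of_gt hμ0), ENNReal.ofReal_one]
  calc ENNReal.ofReal μ * ∫⁻ x : ℝ × ℝ,
        ENNReal.ofReal ((jBracket (s * x.1) ^ N) ^ 2) * (‖g (s • (y - x))‖₊ : ℝ≥0∞) ^ 2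
      ≤ ENNReal.ofReal μ * ∫⁻ x : ℝ × ℝ,
          (ENNReal.ofReal ((2:ℝ) ^ N.natAbs) *
            ENNReal.ofReal ((jBracket (s * y.1) ^ N) ^ 2)) * Φ (s • (y - x)) :=
        mul_le_mul_right (lintegral_mono hpt) _
    _ = ENNReal.ofReal μ * ((ENNReal.ofReal ((2:ℝ) ^ N.natAbs) *
          ENNReal.ofReal ((jBracket (s * y.1) ^ N) ^ 2)) *
          ∫⁻ x : ℝ × ℝ, Φ (s • (y - x))) := by
        rw [lintegral_const_mul' _ _ (by finiteness)]
    _ = (ENNReal.ofReal ((2:ℝ) ^ N.natAbs) *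
          ENNReal.ofReal ((jBracket (s * y.1) ^ N) ^ 2)) *
          (ENNReal.ofReal μ * ENNReal.ofReal μ⁻¹) * ∫⁻ z : ℝ × ℝ, Φ z := by
        rw [htrans, hscale]
        ring
    _ = (ENNReal.ofReal ((2:ℝ) ^ N.natAbs) *
          ENNReal.ofReal ((jBracket (s * y.1) ^ N) ^ 2)) * ∫⁻ z : ℝ × ℝ, Φ z := by
        rw [hμinv, mul_one]
    _ ≤ (ENNReal.ofReal ((2:ℝ) ^ N.natAbs) *
          ENNReal.ofReal ((jBracket (s * y.1) ^ N) ^ 2)) * ENNReal.ofReal D :=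
        mul_le_mul_right hD _
    _ = ENNReal.ofReal ((2 : ℝ) ^ N.natAbs * D) *
          ENNReal.ofReal ((jBracket (s * y.1) ^ N) ^ 2) := by
        rw [ENNReal.ofReal_mul (by positivity)]
        ring

lemma xslice (μ : ℝ) (hμ : 1 ≤ μ) (g : SchwartzMap (ℝ × ℝ) ℝ) (f : ℝ × ℝ → ℂ)
    (hf : AEStronglyMeasurable f volume) (x : ℝ × ℝ) :
    ∫⁻ ξ : ℝ × ℝ, (‖wavePacket μ g f x ξ‖₊ : ℝ≥0∞) ^ 2
      ≤ ENNReal.ofReal (8 * π ^ 2) * ENNReal.ofReal μ *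
        ∫⁻ y : ℝ × ℝ, (‖g (Real.sqrt μ • (y - x))‖₊ : ℝ≥0∞) ^ 2 * (‖f y‖₊ : ℝ≥0∞) ^ 2 := by
  have hμ0 : (0:ℝ) < μ := lt_of_lt_of_le one_pos hμ
  set s : ℝ := Real.sqrt μ with hs
  have hs0 : (0:ℝ) ≤ s := Real.sqrt_nonneg μ
  have hs2 : s ^ 2 = μ := Real.sq_sqrt hμ0.le
  set h : ℝ × ℝ → ℂ := fun y => ((g (s • (y - x)) : ℝ) : ℂ) * f y with hh
  have hgc : Continuous fun y : ℝ × ℝ => ((g (s • (y - x)) : ℝ) : ℂ) := by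
    refine Complex.continuous_ofReal.comp (g.continuous.comp ?_)
    fun_prop
  have hhm : AEStronglyMeasurable h volume := hgc.aestronglyMeasurable.mul hf
  have hrw : ∀ ξ : ℝ × ℝ, wavePacket μ g f x ξ =
      (s : ℂ) * (Complex.exp (Complex.I * ((ξ.1 * x.1 + ξ.2 * x.2 : ℝ) : ℂ)) *
        ∫ y : ℝ × ℝ, phase2 ξ y * h y) := by
    intro ξ
    rw [wavePacket, ← hs]
    congr 1
    have hptw : ∀ y : ℝ × ℝ,
        Complex.exp (-Complex.I * ((ξ.1 * (y.1 - x.1) + ξ.2 * (y.2 - x.2) : ℝ) : ℂ)) *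
          ((g (s • (y - x)) : ℝ) : ℂ) * f y =
        Complex.exp (Complex.I * ((ξ.1 * x.1 + ξ.2 * x.2 : ℝ) : ℂ)) * (phase2 ξ y * h y) := by
      intro y
      have hexp : Complex.exp (-Complex.I * ((ξ.1 * (y.1 - x.1) + ξ.2 * (y.2 - x.2) : ℝ) : ℂ))
          = Complex.exp (Complex.I * ((ξ.1 * x.1 + ξ.2 * x.2 : ℝ) : ℂ)) * phase2 ξ y := by
        rw [phase2, ← Complex.exp_add]
        congr 1
        push_cast
        ring
      rw [hexp, hh]
      ring
    simp only [hptw]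
    rw [integral_const_mul]
  have hnn : ∀ ξ : ℝ × ℝ, (‖wavePacket μ g f x ξ‖₊ : ℝ≥0∞) ^ 2 =
      ENNReal.ofReal μ * (‖∫ y : ℝ × ℝ, phase2 ξ y * h y‖₊ : ℝ≥0∞) ^ 2 := by
    intro ξ
    rw [hrw ξ]
    have e1 : (‖(s : ℂ)‖₊ : ℝ≥0∞) = ENNReal.ofReal s := by
      rw [← ofReal_norm_eq_coe_nnnorm, Complex.norm_real, Real.norm_eq_abs,
        _root_.abs_of_nonneg hs0]
    have e2 : (‖Complex.exp (Complex.I * ((ξ.1 * x.1 + ξ.2 * x.2 : ℝ) : ℂ))‖₊ : ℝ≥0∞) = 1 := by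
      rw [← ofReal_norm_eq_coe_nnnorm, Complex.norm_exp]
      simp
    rw [nnnorm_mul, nnnorm_mul, ENNReal.coe_mul, ENNReal.coe_mul, e1, e2, one_mul, mul_pow,
      ← ENNReal.ofReal_pow hs0, hs2]
  simp only [hnn]
  rw [lintegral_const_mul' _ _ ENNReal.ofReal_ne_top]
  have hnorm_h : ∀ y : ℝ × ℝ, (‖h y‖₊ : ℝ≥0∞) ^ 2 =
      (‖g (s • (y - x))‖₊ : ℝ≥0∞) ^ 2 * (‖f y‖₊ : ℝ≥0∞) ^ 2 := by
    intro y
    rw [hh]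
    simp only [nnnorm_mul, ENNReal.coe_mul, mul_pow]
    congr 2
    rw [← ofReal_norm_eq_coe_nnnorm, ← ofReal_norm_eq_coe_nnnorm, Complex.norm_real]
  by_cases hint : Integrable h
  · have hkey := lintegral_fourier_sq_le hint
    calc ENNReal.ofReal μ * ∫⁻ ξ : ℝ × ℝ, (‖∫ y : ℝ × ℝ, phase2 ξ y * h y‖₊ : ℝ≥0∞) ^ 2
        ≤ ENNReal.ofReal μ *
            (ENNReal.ofReal (8 * π ^ 2) * ∫⁻ y : ℝ × ℝ, (‖h y‖₊ : ℝ≥0∞) ^ 2) :=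
          mul_le_mul_right hkey _
      _ = ENNReal.ofReal (8 * π ^ 2) * ENNReal.ofReal μ *
            ∫⁻ y : ℝ × ℝ, (‖g (s • (y - x))‖₊ : ℝ≥0∞) ^ 2 * (‖f y‖₊ : ℝ≥0∞) ^ 2 := by
          simp only [hnorm_h]
          ring
  · have hzero : ∀ ξ : ℝ × ℝ, (∫ y : ℝ × ℝ, phase2 ξ y * h y) = 0 := by
      intro ξ
      apply integral_undef
      intro hcon
      apply hint
      have hptw : ∀ y : ℝ × ℝ,
          Complex.exp (Complex.I * ((ξ.1 * y.1 + ξ.2 * y.2 : ℝ) : ℂ)) * (phase2 ξ y * h y)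
            = h y := by
        intro y
        rw [phase2, ← mul_assoc, ← Complex.exp_add]
        rw [show Complex.I * ((ξ.1 * y.1 + ξ.2 * y.2 : ℝ) : ℂ) +
            -Complex.I * ((ξ.1 * y.1 + ξ.2 * y.2 : ℝ) : ℂ) = 0 by ring, Complex.exp_zero,
          one_mul]
      have hb : Integrable (fun y : ℝ × ℝ =>
          Complex.exp (Complex.I * ((ξ.1 * y.1 + ξ.2 * y.2 : ℝ) : ℂ)) * (phase2 ξ y * h y)) := by
        refine hcon.bdd_mul (c := 1) ?_ (Filter.Eventually.of_forall fun y => ?_)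
        · have : Continuous fun y : ℝ × ℝ =>
              Complex.exp (Complex.I * ((ξ.1 * y.1 + ξ.2 * y.2 : ℝ) : ℂ)) := by fun_prop
          exact this.aestronglyMeasurable
        · rw [Complex.norm_exp]
          simp
      exact hb.congr (Filter.Eventually.of_forall hptw)
    simp only [hzero]
    simp


lemma jBracket_continuous : Continuous jBracket := by
  unfold jBracket; fun_prop

lemma eLpNorm_two_eq {α : Type*} [MeasurableSpace α] {ν : Measure α} (u : α → ℂ) :
    eLpNorm u 2 ν = (∫⁻ a, (‖u a‖₊ : ℝ≥0∞) ^ 2 ∂ν) ^ (1/2 : ℝ) := by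
  rw [eLpNorm_eq_lintegral_rpow_enorm_toReal (by norm_num) (by norm_num),
    show ((2:ℝ≥0∞).toReal) = ((2:ℕ):ℝ) by simp]
  simp only [ENNReal.rpow_natCast]
  norm_num
  rfl

lemma coe_mul_nnnorm_sq (r : ℝ) (hr : 0 ≤ r) (v : ℂ) :
    (‖(r : ℂ) * v‖₊ : ℝ≥0∞) ^ 2 = ENNReal.ofReal (r ^ 2) * (‖v‖₊ : ℝ≥0∞) ^ 2 := by
  rw [nnnorm_mul, ENNReal.coe_mul, mul_pow]
  congr 1
  rw [← ofReal_norm_eq_coe_nnnorm, Complex.norm_real, Real.norm_eq_abs,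
    _root_.abs_of_nonneg hr, ← ENNReal.ofReal_pow hr]

/-- **Weighted `L²` bounds for the wave packet transform.**  With `x' = (x₂,x₃)` and
`y' = (y₂,y₃)`, for every integer `N` (positive or negative) there is a constant `C_N`,
independent of `μ ≥ 1`, such that
`‖⟨μ^{1/2}x₂⟩^N (T_μ f)(x',ξ')‖_{L²(ℝ⁴)} ≤ C_N ‖⟨μ^{1/2}y₂⟩^N f‖_{L²(ℝ²)}`. -/
theorem wavePacket_weighted_L2 :
    ∀ c : ℝ, 0 < c → ∀ g : SchwartzMap (ℝ × ℝ) ℝ,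
      (∀ x y : ℝ × ℝ, euclNorm2 x = euclNorm2 y → g x = g y) →
      eLpNorm (fun x => (g x : ℝ)) 2 volume = ENNReal.ofReal ((2 * Real.pi)⁻¹) →
      (∀ ζ : ℝ × ℝ, c < euclNorm2 ζ → fourierTransform2 (fun x => ((g x : ℝ) : ℂ)) ζ = 0) →
      ∀ N : ℤ, ∃ C : ℝ, 0 < C ∧
        ∀ μ : ℝ, 1 ≤ μ → ∀ f : ℝ × ℝ → ℂ, AEStronglyMeasurable f volume →
          eLpNorm (fun p : (ℝ × ℝ) × (ℝ × ℝ) =>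
              ((jBracket (Real.sqrt μ * p.1.1) ^ N : ℝ) : ℂ) * wavePacket μ g f p.1 p.2) 2 volume
            ≤ ENNReal.ofReal C *
              eLpNorm (fun y : ℝ × ℝ =>
                ((jBracket (Real.sqrt μ * y.1) ^ N : ℝ) : ℂ) * f y) 2 volume := by
  intro c hc g hrad hnorm hsupp N
  have heven : ∀ z : ℝ × ℝ, g (-z) = g z := by
    intro z
    refine hrad (-z) z ?_
    simp [euclNorm2, Prod.fst_neg, Prod.snd_neg]
  obtain ⟨D, hD0, hker⟩ := kernel_bound g heven N
  set Ctot : ℝ := 8 * π ^ 2 * ((2:ℝ) ^ N.natAbs * D) with hCt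
  have hCt0 : 0 ≤ Ctot := by positivity
  refine ⟨Real.sqrt Ctot + 1, by positivity, ?_⟩
  intro μ hμ f hf
  have hμ0 : (0:ℝ) < μ := lt_of_lt_of_le one_pos hμ
  set s : ℝ := Real.sqrt μ with hs
  set W : ℝ × ℝ → ℝ := fun v => jBracket (s * v.1) ^ N with hW
  have hWpos : ∀ v, 0 < W v := fun v => zpow_pos (jBracket_pos _) N
  -- measurability of the wave packet transform
  have hkerc : Continuous (fun q : ((ℝ × ℝ) × (ℝ × ℝ)) × (ℝ × ℝ) =>
      Complex.exp (-Complex.I *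
          ((q.1.2.1 * (q.2.1 - q.1.1.1) + q.1.2.2 * (q.2.2 - q.1.1.2) : ℝ) : ℂ)) *
        ((g (s • (q.2 - q.1.1)) : ℝ) : ℂ)) := by
    refine Continuous.mul ?_ (Complex.continuous_ofReal.comp (g.continuous.comp (by fun_prop)))
    fun_prop
  have h1 : AEStronglyMeasurable (fun q : ((ℝ × ℝ) × (ℝ × ℝ)) × (ℝ × ℝ) =>
      Complex.exp (-Complex.I *
          ((q.1.2.1 * (q.2.1 - q.1.1.1) + q.1.2.2 * (q.2.2 - q.1.1.2) : ℝ) : ℂ)) *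
        ((g (s • (q.2 - q.1.1)) : ℝ) : ℂ) * f q.2) (volume.prod volume) :=
    hkerc.aestronglyMeasurable.mul
      (hf.comp_quasiMeasurePreserving Measure.quasiMeasurePreserving_snd)
  have hwPm : AEStronglyMeasurable
      (fun p : (ℝ × ℝ) × (ℝ × ℝ) => wavePacket μ g f p.1 p.2) volume := by
    have h2 := h1.integral_prod_right'
    exact h2.const_mul ((s : ℝ) : ℂ)
  have hWc : Continuous W := by
    refine Continuous.zpow₀ ?_ N fun v => Or.inl (ne_of_gt (jBracket_pos _))
    exact jBracket_continuous.comp (by fun_prop)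
  have hu_aesm : AEStronglyMeasurable
      (fun p : (ℝ × ℝ) × (ℝ × ℝ) => ((W p.1 : ℝ) : ℂ) * wavePacket μ g f p.1 p.2) volume :=
    ((Complex.continuous_ofReal.comp (hWc.comp continuous_fst)).aestronglyMeasurable).mul hwPm
  -- the key lintegral estimate
  set af : ℝ × ℝ → ℝ≥0∞ := fun y => (‖f y‖₊ : ℝ≥0∞) ^ 2 with haf
  have haf_m : AEMeasurable af volume := hf.enorm.pow_const 2
  set Gg : (ℝ × ℝ) → (ℝ × ℝ) → ℝ≥0∞ :=
    fun x y => (‖g (s • (y - x))‖₊ : ℝ≥0∞) ^ 2 with hGg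
  have hGg_m : Measurable (fun p : (ℝ × ℝ) × (ℝ × ℝ) => Gg p.1 p.2) := by
    have : Continuous (fun p : (ℝ × ℝ) × (ℝ × ℝ) => g (s • (p.2 - p.1))) :=
      g.continuous.comp (by fun_prop)
    exact (this.measurable.nnnorm.coe_nnreal_ennreal).pow_const 2
  set c8 : ℝ≥0∞ := ENNReal.ofReal (8 * π ^ 2) with hc8
  set cμ : ℝ≥0∞ := ENNReal.ofReal μ with hcμ
  have key : (∫⁻ p : (ℝ × ℝ) × (ℝ × ℝ),
      (‖((W p.1 : ℝ) : ℂ) * wavePacket μ g f p.1 p.2‖₊ : ℝ≥0∞) ^ 2)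
      ≤ ENNReal.ofReal Ctot * ∫⁻ y : ℝ × ℝ, ENNReal.ofReal (W y ^ 2) * af y := by
    have hprod : (volume : Measure ((ℝ × ℝ) × (ℝ × ℝ))) =
        (volume : Measure (ℝ × ℝ)).prod volume := rfl
    rw [hprod, lintegral_prod (fun p : (ℝ × ℝ) × (ℝ × ℝ) =>
      (‖((W p.1 : ℝ) : ℂ) * wavePacket μ g f p.1 p.2‖₊ : ℝ≥0∞) ^ 2) ((hu_aesm.enorm.pow_const 2))]
    have hinner : ∀ x : ℝ × ℝ,
        (∫⁻ ξ : ℝ × ℝ, (‖((W x : ℝ) : ℂ) * wavePacket μ g f x ξ‖₊ : ℝ≥0∞) ^ 2)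
          ≤ c8 * cμ * (ENNReal.ofReal (W x ^ 2) * ∫⁻ y : ℝ × ℝ, Gg x y * af y) := by
      intro x
      have e1 : ∀ ξ : ℝ × ℝ, (‖((W x : ℝ) : ℂ) * wavePacket μ g f x ξ‖₊ : ℝ≥0∞) ^ 2 =
          ENNReal.ofReal (W x ^ 2) * (‖wavePacket μ g f x ξ‖₊ : ℝ≥0∞) ^ 2 :=
        fun ξ => coe_mul_nnnorm_sq (W x) (hWpos x).le _
      simp only [e1]
      rw [lintegral_const_mul' _ _ ENNReal.ofReal_ne_top]
      calc ENNReal.ofReal (W x ^ 2) * ∫⁻ ξ : ℝ × ℝ, (‖wavePacket μ g f x ξ‖₊ : ℝ≥0∞) ^ 2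
          ≤ ENNReal.ofReal (W x ^ 2) * (c8 * cμ * ∫⁻ y : ℝ × ℝ, Gg x y * af y) :=
            mul_le_mul_right (xslice μ hμ g f hf x) _
        _ = c8 * cμ * (ENNReal.ofReal (W x ^ 2) * ∫⁻ y : ℝ × ℝ, Gg x y * af y) := by ring
    calc ∫⁻ x : ℝ × ℝ, ∫⁻ ξ : ℝ × ℝ,
          (‖((W x : ℝ) : ℂ) * wavePacket μ g f x ξ‖₊ : ℝ≥0∞) ^ 2
        ≤ ∫⁻ x : ℝ × ℝ, c8 * cμ * (ENNReal.ofReal (W x ^ 2) * ∫⁻ y : ℝ × ℝ, Gg x y * af y) :=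
          lintegral_mono hinner
      _ = c8 * ∫⁻ x : ℝ × ℝ, cμ * (ENNReal.ofReal (W x ^ 2) * ∫⁻ y : ℝ × ℝ, Gg x y * af y) := by
          rw [← lintegral_const_mul' c8 _ ENNReal.ofReal_ne_top]
          exact lintegral_congr fun x => by ring
      _ = c8 * ∫⁻ x : ℝ × ℝ, ∫⁻ y : ℝ × ℝ, cμ * (ENNReal.ofReal (W x ^ 2) * (Gg x y * af y)) := by
          congr 1
          refine lintegral_congr fun x => ?_
          rw [show cμ * (ENNReal.ofReal (W x ^ 2) * ∫⁻ y : ℝ × ℝ, Gg x y * af y)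
              = (cμ * ENNReal.ofReal (W x ^ 2)) * ∫⁻ y : ℝ × ℝ, Gg x y * af y by ring,
            ← lintegral_const_mul' _ _
              (ENNReal.mul_ne_top ENNReal.ofReal_ne_top ENNReal.ofReal_ne_top)]
          exact lintegral_congr fun y => by ring
      _ = c8 * ∫⁻ y : ℝ × ℝ, ∫⁻ x : ℝ × ℝ, cμ * (ENNReal.ofReal (W x ^ 2) * (Gg x y * af y)) := by
          congr 1
          refine lintegral_lintegral_swap ?_
          refine (AEMeasurable.const_mul ?_ cμ)
          refine AEMeasurable.mul
            (f := fun p : (ℝ × ℝ) × (ℝ × ℝ) => ENNReal.ofReal (W p.1 ^ 2))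
            (g := fun p : (ℝ × ℝ) × (ℝ × ℝ) => Gg p.1 p.2 * af p.2) ?_
            (AEMeasurable.mul (f := fun p : (ℝ × ℝ) × (ℝ × ℝ) => Gg p.1 p.2)
              (g := fun p : (ℝ × ℝ) × (ℝ × ℝ) => af p.2) ?_ ?_)
          · exact ((hWc.comp continuous_fst).pow 2).measurable.ennreal_ofReal.aemeasurable
          · exact hGg_m.aemeasurable
          · exact haf_m.comp_quasiMeasurePreserving Measure.quasiMeasurePreserving_snd
      _ = c8 * ∫⁻ y : ℝ × ℝ, af y * (cμ * ∫⁻ x : ℝ × ℝ, ENNReal.ofReal (W x ^ 2) * Gg x y) := by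
          congr 1
          refine lintegral_congr fun y => ?_
          rw [show af y * (cμ * ∫⁻ x : ℝ × ℝ, ENNReal.ofReal (W x ^ 2) * Gg x y)
              = (af y * cμ) * ∫⁻ x : ℝ × ℝ, ENNReal.ofReal (W x ^ 2) * Gg x y by ring,
            ← lintegral_const_mul' (af y * cμ) _
              (ENNReal.mul_ne_top (ENNReal.pow_ne_top ENNReal.coe_ne_top)
                ENNReal.ofReal_ne_top)]
          exact lintegral_congr fun x => by ring
      _ ≤ c8 * ∫⁻ y : ℝ × ℝ, af y *
            (ENNReal.ofReal ((2:ℝ) ^ N.natAbs * D) * ENNReal.ofReal (W y ^ 2)) := by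
          refine mul_le_mul_right (lintegral_mono fun y => mul_le_mul_right ?_ _) _
          exact hker μ hμ y
      _ = c8 * (ENNReal.ofReal ((2:ℝ) ^ N.natAbs * D) *
            ∫⁻ y : ℝ × ℝ, ENNReal.ofReal (W y ^ 2) * af y) := by
          congr 1
          rw [← lintegral_const_mul' _ _ ENNReal.ofReal_ne_top]
          exact lintegral_congr fun y => by ring
      _ = ENNReal.ofReal Ctot * ∫⁻ y : ℝ × ℝ, ENNReal.ofReal (W y ^ 2) * af y := by
          rw [show ENNReal.ofReal Ctot = c8 * ENNReal.ofReal ((2:ℝ) ^ N.natAbs * D) by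
            rw [hc8, ← ENNReal.ofReal_mul (by positivity), hCt]]
          ring
  -- conclude via `eLpNorm`
  rw [eLpNorm_two_eq, eLpNorm_two_eq]
  have hRHSpt : ∀ y : ℝ × ℝ, ENNReal.ofReal (W y ^ 2) * af y =
      (‖((W y : ℝ) : ℂ) * f y‖₊ : ℝ≥0∞) ^ 2 := by
    intro y
    rw [coe_mul_nnnorm_sq (W y) (hWpos y).le]
  have key2 : (∫⁻ p : (ℝ × ℝ) × (ℝ × ℝ),
      (‖((W p.1 : ℝ) : ℂ) * wavePacket μ g f p.1 p.2‖₊ : ℝ≥0∞) ^ 2)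
      ≤ ENNReal.ofReal ((Real.sqrt Ctot + 1) ^ 2) *
        ∫⁻ y : ℝ × ℝ, (‖((W y : ℝ) : ℂ) * f y‖₊ : ℝ≥0∞) ^ 2 := by
    refine le_trans key ?_
    simp only [hRHSpt]
    refine mul_le_mul_left (ENNReal.ofReal_le_ofReal ?_) _
    nlinarith [Real.sq_sqrt hCt0, Real.sqrt_nonneg Ctot]
  calc (∫⁻ p : (ℝ × ℝ) × (ℝ × ℝ),
        (‖((W p.1 : ℝ) : ℂ) * wavePacket μ g f p.1 p.2‖₊ : ℝ≥0∞) ^ 2) ^ (1/2 : ℝ)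
      ≤ (ENNReal.ofReal ((Real.sqrt Ctot + 1) ^ 2) *
          ∫⁻ y : ℝ × ℝ, (‖((W y : ℝ) : ℂ) * f y‖₊ : ℝ≥0∞) ^ 2) ^ (1/2 : ℝ) :=
        ENNReal.rpow_le_rpow key2 (by norm_num)
    _ = (ENNReal.ofReal ((Real.sqrt Ctot + 1) ^ 2)) ^ (1/2 : ℝ) *
          (∫⁻ y : ℝ × ℝ, (‖((W y : ℝ) : ℂ) * f y‖₊ : ℝ≥0∞) ^ 2) ^ (1/2 : ℝ) :=
        ENNReal.mul_rpow_of_nonneg _ _ (by norm_num)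
    _ = ENNReal.ofReal (Real.sqrt Ctot + 1) *
          (∫⁻ y : ℝ × ℝ, (‖((W y : ℝ) : ℂ) * f y‖₊ : ℝ≥0∞) ^ 2) ^ (1/2 : ℝ) := by
        congr 1
        rw [ENNReal.ofReal_rpow_of_pos (by positivity)]
        congr 1
        rw [← Real.sqrt_eq_rpow, Real.sqrt_sq (by positivity)]

end
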